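/- Let A = [[N₁, X, Y],[0, P, Z],[0, 0, N₂]] be a nonnegative integer matrix with N₁, N₂ nilpotent and P the permutation matrix of a single cycle, and let e be a standard basis vector from the middle block, so Z^n/(I−A)Z^n = Z·[e]. Then there exist nonnegative integers n₁,…,n_c such that for every column vector v = (x, y, z) ∈ Z^a × Z^b × Z^c, the class of v in the cokernel equals (y₁ + ⋯ + y_b + n₁z₁ + ⋯ + n_c z_c)·[e]. -/

import Mathlib

open Matrix

def ee1 (a b c : ℕ) : (Fin a → ℤ) →ₗ[ℤ] (Fin a ⊕ (Fin b ⊕ Fin c) → ℤ) where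
  toFun u := Sum.elim u 0
  map_add' u v := by funext i; rcases i with i | i | i <;> simp
  map_smul' r v := by funext i; rcases i with i | i | i <;> simp

def ee2 (a b c : ℕ) : (Fin b → ℤ) →ₗ[ℤ] (Fin a ⊕ (Fin b ⊕ Fin c) → ℤ) where
  toFun v := Sum.elim 0 (Sum.elim v 0)
  map_add' u v := by funext i; rcases i with i | i | i <;> simp
  map_smul' r v := by funext i; rcases i with i | i | i <;> simp

def ee3 (a b c : ℕ) : (Fin c → ℤ) →ₗ[ℤ] (Fin a ⊕ (Fin b ⊕ Fin c) → ℤ) where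
  toFun w := Sum.elim 0 (Sum.elim 0 w)
  map_add' u v := by funext i; rcases i with i | i | i <;> simp
  map_smul' r v := by funext i; rcases i with i | i | i <;> simp

lemma geom_inv {d : ℕ} (N : Matrix (Fin d) (Fin d) ℤ) (m : ℕ) (hm : N ^ m = 0) :
    (1 - N) * (∑ i ∈ Finset.range m, N ^ i) = 1 := by
  have h := mul_geom_sum N m
  rw [hm] at h
  have : (1 - N) * ∑ i ∈ Finset.range m, N ^ i
      = -((N - 1) * ∑ i ∈ Finset.range m, N ^ i) := by
    rw [← neg_mul, neg_sub]
  rw [this, h, neg_sub, sub_zero]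

lemma single_eq_ite {d : ℕ} (i : Fin d) :
    (fun j => if i = j then (1 : ℤ) else 0) = Pi.single i 1 := by
  funext j
  simp [Pi.single_apply, eq_comm]

theorem esscyclic_cokernel_formula (a b c : ℕ)
    (N₁ : Matrix (Fin a) (Fin a) ℤ) (X : Matrix (Fin a) (Fin b) ℤ)
    (Y : Matrix (Fin a) (Fin c) ℤ) (P : Matrix (Fin b) (Fin b) ℤ)
    (Z : Matrix (Fin b) (Fin c) ℤ) (N₂ : Matrix (Fin c) (Fin c) ℤ)
    (A : Matrix (Fin a ⊕ (Fin b ⊕ Fin c)) (Fin a ⊕ (Fin b ⊕ Fin c)) ℤ)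
    (hA : A = Matrix.fromBlocks N₁ (Matrix.fromCols X Y) 0
      (Matrix.fromBlocks P Z 0 N₂))
    (hnn : ∀ i j, 0 ≤ A i j)
    (hN₁ : IsNilpotent N₁) (hN₂ : IsNilpotent N₂)
    (σ : Equiv.Perm (Fin b))
    (hP : P = Matrix.of fun i j => if σ i = j then (1 : ℤ) else 0)
    (hσ : ∀ i j : Fin b, ∃ k : ℕ, (σ ^ k) i = j)
    (i₀ : Fin b) :
    ∃ nk : Fin c → ℕ,
      ∀ (x : Fin a → ℤ) (y : Fin b → ℤ) (z : Fin c → ℤ),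
        (Submodule.Quotient.mk (Sum.elim x (Sum.elim y z)) :
            (Fin a ⊕ (Fin b ⊕ Fin c) → ℤ) ⧸ LinearMap.range ((1 - A).mulVecLin)) =
          ((∑ i, y i) + ∑ k, (nk k : ℤ) * z k) •
            Submodule.Quotient.mk (Pi.single (Sum.inr (Sum.inl i₀)) 1) := by
  classical
  set R : Submodule ℤ (Fin a ⊕ (Fin b ⊕ Fin c) → ℤ) :=
    LinearMap.range ((1 - A).mulVecLin) with hR
  have hmul : ∀ (u : Fin a → ℤ) (v : Fin b → ℤ) (w : Fin c → ℤ),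
      (1 - A) *ᵥ (Sum.elim u (Sum.elim v w)) =
        Sum.elim (u - N₁ *ᵥ u - X *ᵥ v - Y *ᵥ w)
          (Sum.elim (v - P *ᵥ v - Z *ᵥ w) (w - N₂ *ᵥ w)) := by
    intro u v w
    have : A *ᵥ (Sum.elim u (Sum.elim v w)) =
        Sum.elim (N₁ *ᵥ u + (X *ᵥ v + Y *ᵥ w)) (Sum.elim (P *ᵥ v + Z *ᵥ w) (N₂ *ᵥ w)) := by
      rw [hA, fromBlocks_mulVec]
      funext i
      rcases i with i | i | i <;>
        simp [fromBlocks_mulVec, Sum.elim_comp_inl, Sum.elim_comp_inr]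
    rw [Matrix.sub_mulVec, Matrix.one_mulVec, this]
    funext i
    rcases i with i | i | i <;> simp <;> ring
  have hmk0 : ∀ (v : Fin a ⊕ (Fin b ⊕ Fin c) → ℤ), R.mkQ ((1 - A) *ᵥ v) = 0 := by
    intro v
    rw [Submodule.mkQ_apply, Submodule.Quotient.mk_eq_zero]
    exact ⟨v, by simp [mulVecLin_apply, Matrix.sub_mulVec]⟩
  -- the first-block vectors die in the quotient
  obtain ⟨m₁, hm₁⟩ := hN₁
  set B₁ : Matrix (Fin a) (Fin a) ℤ := ∑ i ∈ Finset.range m₁, N₁ ^ i with hB₁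
  have h1B : (1 - N₁) * B₁ = 1 := geom_inv N₁ m₁ hm₁
  have h1 : ∀ u : Fin a → ℤ, R.mkQ (ee1 a b c u) = 0 := by
    intro u
    have hBu : B₁ *ᵥ u - N₁ *ᵥ (B₁ *ᵥ u) = u := by
      rw [Matrix.mulVec_mulVec, ← Matrix.sub_mulVec,
        show B₁ - N₁ * B₁ = (1 - N₁) * B₁ by rw [sub_mul, one_mul], h1B, Matrix.one_mulVec]
    have key : (1 - A) *ᵥ (Sum.elim (B₁ *ᵥ u) (Sum.elim 0 0)) = ee1 a b c u := by
      rw [hmul, Matrix.mulVec_zero, Matrix.mulVec_zero, Matrix.mulVec_zero,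
        Matrix.mulVec_zero, Matrix.mulVec_zero]
      simp only [sub_zero, hBu]
      funext i
      rcases i with i | i | i <;> simp [ee1]
    rw [← key]; exact hmk0 _
  -- single step of the cycle in the middle block
  have h2step : ∀ j : Fin b,
      R.mkQ (ee2 a b c (Pi.single (σ j) 1)) = R.mkQ (ee2 a b c (Pi.single j 1)) := by
    intro j
    have hPcol : P *ᵥ Pi.single (σ j) 1 = Pi.single j 1 := by
      funext i
      simp only [hP, mulVec_single, of_apply, mul_one, Pi.single_apply]
      simp [σ.injective.eq_iff, eq_comm]
    have key : ee2 a b c (Pi.single (σ j) 1) - ee2 a b c (Pi.single j 1) =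
        (1 - A) *ᵥ (Sum.elim 0 (Sum.elim (Pi.single (σ j) 1) 0))
          + ee1 a b c (X *ᵥ Pi.single (σ j) 1) := by
      rw [hmul, hPcol]
      funext i
      rcases i with i | i | i <;>
        simp [ee1, ee2, Pi.single_apply]
    have h := congrArg R.mkQ key
    rw [map_sub, map_add, h1, hmk0, add_zero] at h
    exact sub_eq_zero.mp h
  -- in the quotient all middle basis vectors agree with e_{i₀}
  have h2 : ∀ j : Fin b,
      R.mkQ (ee2 a b c (Pi.single j 1)) = R.mkQ (ee2 a b c (Pi.single i₀ 1)) := by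
    have hiter : ∀ k : ℕ,
        R.mkQ (ee2 a b c (Pi.single ((σ ^ k) i₀) 1)) = R.mkQ (ee2 a b c (Pi.single i₀ 1)) := by
      intro k
      induction k with
      | zero => simp
      | succ k ih =>
        rw [show (σ ^ (k + 1)) i₀ = σ ((σ ^ k) i₀) by rw [pow_succ' σ k]; rfl]
        rw [h2step, ih]
    intro j
    obtain ⟨k, hk⟩ := hσ i₀ j
    rw [← hk]; exact hiter k
  -- the third block
  obtain ⟨m₂, hm₂⟩ := hN₂
  set M : Matrix (Fin c) (Fin c) ℤ := ∑ i ∈ Finset.range m₂, N₂ ^ i with hM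
  have h2B : (1 - N₂) * M = 1 := geom_inv N₂ m₂ hm₂
  have hZnn : ∀ i k, 0 ≤ Z i k := by
    intro i k
    have := hnn (Sum.inr (Sum.inl i)) (Sum.inr (Sum.inr k))
    simpa [hA] using this
  have hN₂nn : ∀ i k, 0 ≤ N₂ i k := by
    intro i k
    have := hnn (Sum.inr (Sum.inr i)) (Sum.inr (Sum.inr k))
    simpa [hA] using this
  have hpow : ∀ (p : ℕ) (i k : Fin c), 0 ≤ (N₂ ^ p) i k := by
    intro p
    induction p with
    | zero =>
      intro i k
      rw [pow_zero, Matrix.one_apply]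
      split <;> norm_num
    | succ p ih =>
      intro i k
      rw [pow_succ, Matrix.mul_apply]
      exact Finset.sum_nonneg fun l _ => mul_nonneg (ih i l) (hN₂nn l k)
  have hMnn : ∀ i k, 0 ≤ M i k := by
    intro i k
    rw [hM]
    simp only [Matrix.sum_apply]
    exact Finset.sum_nonneg fun p _ => hpow p i k
  -- the coefficients
  set nk : Fin c → ℕ := fun k => (∑ i, (Z *ᵥ (M *ᵥ Pi.single k 1)) i).toNat with hnk
  have hval : ∀ (k : Fin c) (i : Fin b),
      (Z *ᵥ (M *ᵥ Pi.single k 1)) i = ∑ l, Z i l * M l k := by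
    intro k i
    rw [Matrix.mulVec_mulVec, Matrix.mulVec_single]
    simp [Matrix.mul_apply]
  have hnkval : ∀ k, (nk k : ℤ) = ∑ i, (Z *ᵥ (M *ᵥ Pi.single k 1)) i := by
    intro k
    rw [hnk]
    apply Int.toNat_of_nonneg
    apply Finset.sum_nonneg
    intro i _
    rw [hval]
    exact Finset.sum_nonneg fun l _ => mul_nonneg (hZnn i l) (hMnn l k)
  -- third-block basis vectors in the quotient
  have h3 : ∀ k : Fin c, R.mkQ (ee3 a b c (Pi.single k 1)) =
      (nk k : ℤ) • R.mkQ (ee2 a b c (Pi.single i₀ 1)) := by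
    intro k
    set w : Fin c → ℤ := M *ᵥ Pi.single k 1 with hw
    have hww : w - N₂ *ᵥ w = Pi.single k 1 := by
      rw [hw, Matrix.mulVec_mulVec, ← Matrix.sub_mulVec,
        show M - N₂ * M = (1 - N₂) * M by rw [sub_mul, one_mul], h2B, Matrix.one_mulVec]
    have key : ee3 a b c (Pi.single k 1) =
        (1 - A) *ᵥ (Sum.elim 0 (Sum.elim 0 w)) + ee1 a b c (Y *ᵥ w)
          + ee2 a b c (Z *ᵥ w) := by
      rw [hmul, hww]
      funext i
      rcases i with i | i | i <;> simp [ee1, ee2, ee3, Pi.single_apply]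
    have h := congrArg R.mkQ key
    rw [map_add, map_add, hmk0, h1, zero_add, zero_add] at h
    rw [h]
    have hdec := LinearMap.pi_apply_eq_sum_univ (R.mkQ ∘ₗ (ee2 a b c)) (Z *ᵥ w)
    simp only [LinearMap.comp_apply, single_eq_ite, h2] at hdec
    rw [hdec, ← Finset.sum_smul, hnkval, hw]
  -- assembly
  refine ⟨nk, fun x y z => ?_⟩
  have hxyz : Sum.elim x (Sum.elim y z) = ee1 a b c x + ee2 a b c y + ee3 a b c z := by
    funext i
    rcases i with i | i | i <;> simp [ee1, ee2, ee3]
  have he : Pi.single (Sum.inr (Sum.inl i₀)) (1 : ℤ) = ee2 a b c (Pi.single i₀ 1) := by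
    funext i
    rcases i with i | i | i <;> simp [ee2, Pi.single_apply]
  rw [show (Submodule.Quotient.mk (Sum.elim x (Sum.elim y z)) :
      (Fin a ⊕ (Fin b ⊕ Fin c) → ℤ) ⧸ R) = R.mkQ (Sum.elim x (Sum.elim y z)) from rfl,
    show (Submodule.Quotient.mk (Pi.single (Sum.inr (Sum.inl i₀)) 1) :
      (Fin a ⊕ (Fin b ⊕ Fin c) → ℤ) ⧸ R) = R.mkQ (Pi.single (Sum.inr (Sum.inl i₀)) 1) from rfl,
    he, hxyz, map_add, map_add, h1, zero_add]
  have hy : R.mkQ (ee2 a b c y) = (∑ i, y i) • R.mkQ (ee2 a b c (Pi.single i₀ 1)) := by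
    have hdec := LinearMap.pi_apply_eq_sum_univ (R.mkQ ∘ₗ (ee2 a b c)) y
    simp only [LinearMap.comp_apply, single_eq_ite, h2] at hdec
    rw [hdec, ← Finset.sum_smul]
  have hz : R.mkQ (ee3 a b c z) = (∑ k, (nk k : ℤ) * z k) • R.mkQ (ee2 a b c (Pi.single i₀ 1)) := by
    have hdec := LinearMap.pi_apply_eq_sum_univ (R.mkQ ∘ₗ (ee3 a b c)) z
    simp only [LinearMap.comp_apply, single_eq_ite, h3] at hdec
    rw [hdec]
    simp only [smul_smul]
    rw [← Finset.sum_smul]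
    congr 1
    exact Finset.sum_congr rfl fun k _ => mul_comm _ _
  rw [hy, hz, ← add_smul]
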